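/- In the split-graph construction above (with I_s = Y ∪ {z_1}, I_t = {z_2}), suppose σ = ⟨I_s = I_0, I_1, ..., I_{ℓ+1} = I_t⟩ is a reconfiguration sequence with ℓ ≤ k. Then for every i ∈ [n] and j ∈ [k+2], there exists r ∈ [ℓ] such that N(y_{i,j}) ∩ I_r ≠ ∅. -/

import Mathlib

/-- A set of vertices is independent: no two of its vertices are adjacent. -/
def IsIndep {V : Type*} (G : SimpleGraph V) (I : Set V) : Prop :=
  ∀ ⦃a⦄, a ∈ I → ∀ ⦃b⦄, b ∈ I → ¬ G.Adj a b

/-- Vertex set of the split graph of the reduction: `X = Fin n` (clique vertices `x_i`),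
`Y = Fin n × Fin (k+2)` (independent vertices `y_{i,j}`), and two extra clique vertices
`z₁ = Bool.false`, `z₂ = Bool.true`. -/
abbrev SplitV (n k : ℕ) := Fin n ⊕ ((Fin n × Fin (k + 2)) ⊕ Bool)

/-- The split graph `G'` of the reduction from Dominating Set: `X ∪ {z₁, z₂}` is a clique,
`Y` is independent, and `x_i` is adjacent to every vertex of `Y_j` iff `v_j ∈ N[v_i]`. -/
def splitG {n : ℕ} (G : SimpleGraph (Fin n)) (k : ℕ) : SimpleGraph (SplitV n k) where
  Adj x y :=
    match x, y with
    | .inl i, .inl j => i ≠ j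
    | .inl i, .inr (.inl (j, _)) => j = i ∨ G.Adj i j
    | .inr (.inl (j, _)), .inl i => j = i ∨ G.Adj i j
    | .inl _, .inr (.inr _) => True
    | .inr (.inr _), .inl _ => True
    | .inr (.inr b), .inr (.inr b') => b ≠ b'
    | .inr (.inl _), .inr (.inl _) => False
    | .inr (.inl _), .inr (.inr _) => False
    | .inr (.inr _), .inr (.inl _) => False
  symm := by
    constructor
    rintro (i | ⟨j, m⟩ | b) (i' | ⟨j', m'⟩ | b') h
    · exact h.symm
    · exact h
    · trivial
    · exact h
    · exact h.elim
    · exact h.elim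
    · trivial
    · exact h.elim
    · exact h.symm
  loopless := by
    constructor
    rintro (i | ⟨j, m⟩ | b) h
    · exact h rfl
    · exact h
    · exact h rfl

/-- The independent part `Y` of the split graph. -/
def Yset (n k : ℕ) : Set (SplitV n k) :=
  {x | ∃ p : Fin n × Fin (k + 2), x = Sum.inr (Sum.inl p)}

/-- The vertices `z₁` (for `b = false`) and `z₂` (for `b = true`). -/
def zvert (n k : ℕ) (b : Bool) : SplitV n k := Sum.inr (Sum.inr b)

/-- In any reconfiguration sequence of length `ℓ + 1 ≤ k + 1` from `Y ∪ {z₁}` to `{z₂}`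
in the split graph, every vertex `y_{i,j}` has a neighbor in some intermediate set `I_r`
with `r ∈ [ℓ]`. -/
theorem stmt_15 {n k ℓ : ℕ} (G : SimpleGraph (Fin n)) (hℓk : ℓ ≤ k)
    (seq : ℕ → Set (SplitV n k))
    (h0 : seq 0 = Yset n k ∪ {zvert n k false})
    (hlast : seq (ℓ + 1) = {zvert n k true})
    (hind : ∀ i ≤ ℓ + 1, IsIndep (splitG G k) (seq i))
    (hconn : ∀ i < ℓ + 1,
      ((splitG G k).induce (symmDiff (seq i) (seq (i + 1)))).Connected) :
    ∀ (i : Fin n) (j : Fin (k + 2)), ∃ r : ℕ, 1 ≤ r ∧ r ≤ ℓ ∧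
      ((splitG G k).neighborSet (Sum.inr (Sum.inl (i, j))) ∩ seq r).Nonempty := by
  intro i j
  by_contra hcon
  push_neg at hcon
  set y : Fin (k + 2) → SplitV n k := fun j' => Sum.inr (Sum.inl (i, j')) with hy
  -- no neighbor of any y_{i,j'} appears in any seq r, r ≤ ℓ+1
  have hN : ∀ (j' : Fin (k + 2)) (r : ℕ), r ≤ ℓ + 1 →
      ∀ w ∈ seq r, ¬ (splitG G k).Adj (y j') w := by
    intro j' r hr w hw hadj
    match w with
    | Sum.inl a =>
      rcases Nat.eq_zero_or_pos r with h0r | h1r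
      · subst h0r
        rw [h0] at hw
        rcases hw with ⟨p, hp⟩ | hz
        · exact absurd hp (by simp)
        · exact absurd hz (by simp [zvert])
      · rcases eq_or_lt_of_le hr with he | hlt
        · rw [he, hlast] at hw
          exact absurd hw (by simp [zvert])
        · have hne : ((splitG G k).neighborSet (Sum.inr (Sum.inl (i, j))) ∩
              seq r).Nonempty := ⟨Sum.inl a, hadj, hw⟩
          rw [hcon r h1r (Nat.lt_succ_iff.mp hlt)] at hne
          exact Set.not_nonempty_empty hne
    | Sum.inr (Sum.inl p) => exact hadj
    | Sum.inr (Sum.inr b) => exact hadj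
  -- membership facts
  have hmem0 : ∀ j', y j' ∈ seq 0 := by
    intro j'; rw [h0]; exact Or.inl ⟨(i, j'), rfl⟩
  have hmemlast : ∀ j', y j' ∉ seq (ℓ + 1) := by
    intro j' hmem; rw [hlast] at hmem; simp [zvert, y] at hmem
  -- each y j' is dropped at some step
  have hstep : ∀ j', ∃ r ≤ ℓ, y j' ∈ seq r ∧ y j' ∉ seq (r + 1) := by
    intro j'
    by_contra hc
    push_neg at hc
    have : ∀ m, m ≤ ℓ + 1 → y j' ∈ seq m := by
      intro m
      induction m with
      | zero => intro _; exact hmem0 j'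
      | succ m ih =>
        intro hm
        exact hc m (by omega) (ih (by omega))
    exact hmemlast j' (this (ℓ + 1) le_rfl)
  choose f hf1 hf2 hf3 using hstep
  -- the symmetric difference at step f j' is exactly {y j'}
  have hsingle : ∀ j', symmDiff (seq (f j')) (seq (f j' + 1)) = {y j'} := by
    intro j'
    have hyin : y j' ∈ symmDiff (seq (f j')) (seq (f j' + 1)) :=
      Set.mem_symmDiff.mpr (Or.inl ⟨hf2 j', hf3 j'⟩)
    apply Set.eq_singleton_iff_unique_mem.mpr
    refine ⟨hyin, ?_⟩
    intro w hw
    by_contra hne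
    have hr := hconn (f j') (by have := hf1 j'; omega)
    obtain ⟨p⟩ := hr ⟨y j', hyin⟩ ⟨w, hw⟩
    cases p with
    | nil => exact hne rfl
    | cons h q =>
      rename_i b
      have hadj : (splitG G k).Adj (y j') b.val := h
      have hb : b.val ∈ seq (f j') ∨ b.val ∈ seq (f j' + 1) := by
        rcases Set.mem_symmDiff.mp b.2 with ⟨h1, _⟩ | ⟨h1, _⟩
        · exact Or.inl h1
        · exact Or.inr h1
      rcases hb with h1 | h1
      · exact hN j' (f j') (by have := hf1 j'; omega) b.val h1 hadj
      · exact hN j' (f j' + 1) (by have := hf1 j'; omega) b.val h1 hadj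
  -- f is injective
  have hinj : Function.Injective f := by
    intro a b hab
    have : y a ∈ ({y b} : Set (SplitV n k)) := by
      rw [← hsingle b, ← hab, hsingle a]; rfl
    have := Set.mem_singleton_iff.mp this
    simpa [y, Prod.ext_iff] using this
  -- derive cardinality contradiction
  have hg : Function.Injective (fun j' : Fin (k + 2) =>
      (⟨f j', by have := hf1 j'; omega⟩ : Fin (ℓ + 1))) := by
    intro a b hab
    exact hinj (by simpa using congrArg Fin.val hab)
  have := Fintype.card_le_of_injective _ hg
  simp only [Fintype.card_fin] at this
  omega
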